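/- Suppose each functional d* in a set D ⊆ c_00 (finitely supported sequences) satisfies: d* = e_i* for some i, or admits a decomposition d* = d_1* + b·(d_2* restricted to an interval) + e_i* with d_1*, d_2* ∈ D of strictly smaller 'rank', |coefficients| ≤ 1, and 0 < b ≤ 1/4. If ‖d_1* restricted to any initial interval‖_∞-induced-norm ≤ 2 and ‖d_2* restricted to any interval‖ ≤ 4 inductively, then ‖d* restricted to any initial interval I of ℕ‖ ≤ 2 (as a functional on the space normed by sup over D). -/

import Mathlib

open Classical in
/-- The pairing `⟨d, x⟩ = Σᵢ dᵢ xᵢ` of finitely supported sequences. -/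
noncomputable def pairF (d x : ℕ →₀ ℝ) : ℝ := ∑ i ∈ d.support, d i * x i

open Classical in
/-- The restriction of `d` to the interval `(k, l]`. -/
noncomputable def restrictI (d : ℕ →₀ ℝ) (k l : ℕ) : ℕ →₀ ℝ :=
  d.filter (fun i => k < i ∧ i ≤ l)

lemma sum_range_eq_pairF (d x : ℕ →₀ ℝ) (m : ℕ)
    (h : ∀ j ∈ d.support, j ≤ m) :
    ∑ i ∈ Finset.range (m+1), d i * x i = pairF d x := by
  rw [pairF]
  refine (Finset.sum_subset ?_ ?_).symm
  · intro j hj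
    simpa [Nat.lt_succ_iff] using h j hj
  · intro j _ hj
    simp [Finsupp.notMem_support_iff.mp hj]

lemma filter_sum_eq_range (d x : ℕ →₀ ℝ) (m : ℕ) :
    ∑ i ∈ d.support.filter (· ≤ m), d i * x i
      = ∑ i ∈ Finset.range (m+1), d i * x i := by
  refine Finset.sum_subset ?_ ?_
  · intro j hj
    simp only [Finset.mem_filter] at hj
    simp [Nat.lt_succ_iff, hj.2]
  · intro j hj hj'
    by_cases h0 : d j = 0
    · simp [h0]
    · exact absurd (Finset.mem_filter.mpr ⟨Finsupp.mem_support_iff.mpr h0,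
        by simpa [Nat.lt_succ_iff] using hj⟩) hj'

/-- If every `d* ∈ D` is either a coordinate functional or splits as
`d* = ρ₁·d₁* + b·(d₂*|(k,l]) + e_i*` with `d₁*, d₂* ∈ D` of strictly smaller rank,
`|ρ₁| ≤ 1` and `0 < b ≤ 1/4`, then every restriction of a member of `D` to an
initial interval has norm at most `2` on the space normed by `sup_{e* ∈ D} |e*(x)|`. -/
theorem initial_restriction_bound (b : ℝ) (hb0 : 0 < b) (hb : b ≤ 1 / 4)
    (D : Set (ℕ →₀ ℝ)) (rank : (ℕ →₀ ℝ) → ℕ)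
    (hsplit : ∀ d ∈ D, (∃ i : ℕ, d = Finsupp.single i 1) ∨
      ∃ d₁ ∈ D, ∃ d₂ ∈ D, ∃ (ρ₁ : ℝ) (k l i : ℕ),
        rank d₁ < rank d ∧ rank d₂ < rank d ∧ |ρ₁| ≤ 1 ∧
        (∀ j ∈ d₁.support, j ≤ k) ∧ k < l ∧ l < i ∧
        d = ρ₁ • d₁ + b • restrictI d₂ k l + Finsupp.single i 1)
    (d : ℕ →₀ ℝ) (hd : d ∈ D) (m : ℕ) (x : ℕ →₀ ℝ)
    (hx : ∀ e ∈ D, |pairF e x| ≤ 1) :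
    |∑ i ∈ d.support.filter (· ≤ m), d i * x i| ≤ 2 := by
  rw [filter_sum_eq_range]
  -- the single-functional case, used twice
  have hsing : ∀ (i : ℕ), Finsupp.single i (1:ℝ) ∈ D → ∀ m : ℕ,
      |∑ j ∈ Finset.range (m+1), (Finsupp.single i (1:ℝ)) j * x j| ≤ 2 := by
    intro i hiD m
    have hxi : |x i| ≤ 1 := by
      have := hx _ hiD
      rwa [pairF, Finsupp.support_single_ne_zero i one_ne_zero, Finset.sum_singleton,
        Finsupp.single_eq_same, one_mul] at this
    have hval : ∑ j ∈ Finset.range (m+1), (Finsupp.single i (1:ℝ)) j * x j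
        = if i ∈ Finset.range (m+1) then x i else 0 := by
      rw [← Finset.sum_ite_eq (Finset.range (m+1)) i (fun j => x j)]
      refine Finset.sum_congr rfl fun j _ => ?_
      simp [Finsupp.single_apply]
    rw [hval]
    split
    · linarith [hxi]
    · norm_num
  suffices H : ∀ n : ℕ, ∀ d ∈ D, rank d ≤ n → ∀ m : ℕ,
      |∑ i ∈ Finset.range (m+1), d i * x i| ≤ 2 from H (rank d) d hd le_rfl m
  intro n
  induction n with
  | zero =>
    intro d hdD hrk m
    rcases hsplit d hdD with ⟨i, rfl⟩ | ⟨d₁, _, d₂, _, ρ₁, k, l, i, hr₁, _⟩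
    · exact hsing i hdD m
    · omega
  | succ n ih =>
    intro d hdD hrk m
    rcases hsplit d hdD with ⟨i, rfl⟩ |
      ⟨d₁, hd₁D, d₂, hd₂D, ρ₁, k, l, i, hr₁, hr₂, hρ, hsupp₁, hkl, hli, heq⟩
    · exact hsing i hdD m
    -- decompose the sum
    have hdecomp : ∀ M : ℕ, ∑ j ∈ Finset.range (M+1), d j * x j
        = ρ₁ * (∑ j ∈ Finset.range (M+1), d₁ j * x j)
          + b * (∑ j ∈ Finset.range (M+1), restrictI d₂ k l j * x j)
          + ∑ j ∈ Finset.range (M+1), (Finsupp.single i (1:ℝ)) j * x j := by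
      intro M
      rw [Finset.mul_sum, Finset.mul_sum, ← Finset.sum_add_distrib,
        ← Finset.sum_add_distrib]
      refine Finset.sum_congr rfl fun j _ => ?_
      have : d j = ρ₁ * d₁ j + b * restrictI d₂ k l j + (Finsupp.single i (1:ℝ)) j := by
        rw [heq]; simp
      rw [this]; ring
    have ihd₁ := ih d₁ hd₁D (by omega)
    have ihd₂ := ih d₂ hd₂D (by omega)
    -- value of restriction sums
    have hrest : ∀ M : ℕ, k ≤ M →
        ∑ j ∈ Finset.range (M+1), restrictI d₂ k l j * x j
          = (∑ j ∈ Finset.range (min l M + 1), d₂ j * x j)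
            - ∑ j ∈ Finset.range (k+1), d₂ j * x j := by
      intro M hkM
      have h1 : ∀ j ∈ Finset.range (M+1),
          restrictI d₂ k l j * x j = if k < j ∧ j ≤ l then d₂ j * x j else 0 := by
        intro j _
        rw [restrictI, Finsupp.filter_apply]
        split <;> simp
      rw [Finset.sum_congr rfl h1, ← Finset.sum_filter]
      have hset : (Finset.range (M+1)).filter (fun j => k < j ∧ j ≤ l)
          = Finset.Ico (k+1) (min l M + 1) := by
        ext j
        simp only [Finset.mem_filter, Finset.mem_range, Finset.mem_Ico]
        omega
      rw [hset, Finset.sum_Ico_eq_sub _ (by omega)]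
    rcases le_or_gt m k with hmk | hkm
    · -- m ≤ k : only the d₁ part survives
      have hz1 : ∑ j ∈ Finset.range (m+1), restrictI d₂ k l j * x j = 0 := by
        refine Finset.sum_eq_zero fun j hj => ?_
        simp only [Finset.mem_range, Nat.lt_succ_iff] at hj
        rw [restrictI, Finsupp.filter_apply, if_neg (by omega)]
        ring
      have hz2 : ∑ j ∈ Finset.range (m+1), (Finsupp.single i (1:ℝ)) j * x j = 0 := by
        refine Finset.sum_eq_zero fun j hj => ?_
        simp only [Finset.mem_range, Nat.lt_succ_iff] at hj
        rw [Finsupp.single_apply, if_neg (by omega)]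
        ring
      rw [hdecomp m, hz1, hz2, mul_zero, add_zero, add_zero, abs_mul]
      calc |ρ₁| * |∑ j ∈ Finset.range (m+1), d₁ j * x j| ≤ 1 * 2 :=
            mul_le_mul hρ (ihd₁ m) (abs_nonneg _) zero_le_one
        _ = 2 := by norm_num
    rcases le_or_gt i m with him | hmi
    · -- i ≤ m : the whole functional is inside the window
      have hsupp : ∀ j ∈ d.support, j ≤ m := by
        intro j hj
        by_contra hjm
        push_neg at hjm
        have hj1 : d₁ j = 0 := by
          by_contra h0
          exact absurd (hsupp₁ j (Finsupp.mem_support_iff.mpr h0)) (by omega)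
        have hj2 : restrictI d₂ k l j = 0 := by
          rw [restrictI, Finsupp.filter_apply, if_neg (by omega)]
        have : d j = 0 := by
          rw [heq]; simp [hj1, hj2, Finsupp.single_apply, show ¬ i = j by omega]
        exact Finsupp.mem_support_iff.mp hj this
      rw [sum_range_eq_pairF d x m hsupp]
      linarith [hx d hdD]
    · -- k < m < i
      have hz2 : ∑ j ∈ Finset.range (m+1), (Finsupp.single i (1:ℝ)) j * x j = 0 := by
        refine Finset.sum_eq_zero fun j hj => ?_
        simp only [Finset.mem_range, Nat.lt_succ_iff] at hj
        rw [Finsupp.single_apply, if_neg (by omega)]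
        ring
      have hfull : ∑ j ∈ Finset.range (m+1), d₁ j * x j = pairF d₁ x :=
        sum_range_eq_pairF d₁ x m (fun j hj => le_trans (hsupp₁ j hj) (by omega))
      rw [hdecomp m, hz2, add_zero, hrest m (by omega)]
      have h1 : |ρ₁ * ∑ j ∈ Finset.range (m+1), d₁ j * x j| ≤ 1 := by
        rw [abs_mul, hfull]
        calc |ρ₁| * |pairF d₁ x| ≤ 1 * 1 :=
              mul_le_mul hρ (hx d₁ hd₁D) (abs_nonneg _) zero_le_one
          _ = 1 := by norm_num
      have h2 : |b * ((∑ j ∈ Finset.range (min l m + 1), d₂ j * x j)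
          - ∑ j ∈ Finset.range (k+1), d₂ j * x j)| ≤ 1 := by
        rw [abs_mul, abs_of_pos hb0]
        have hd2a := ihd₂ (min l m)
        have hd2b := ihd₂ k
        have habs : |(∑ j ∈ Finset.range (min l m + 1), d₂ j * x j)
            - ∑ j ∈ Finset.range (k+1), d₂ j * x j| ≤ 4 := by
          calc _ ≤ |∑ j ∈ Finset.range (min l m + 1), d₂ j * x j|
                + |∑ j ∈ Finset.range (k+1), d₂ j * x j| := abs_sub _ _
            _ ≤ 4 := by linarith
        calc b * |(∑ j ∈ Finset.range (min l m + 1), d₂ j * x j)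
              - ∑ j ∈ Finset.range (k+1), d₂ j * x j| ≤ (1/4) * 4 :=
              mul_le_mul hb habs (abs_nonneg _) (by norm_num)
          _ = 1 := by norm_num
      calc |ρ₁ * (∑ j ∈ Finset.range (m+1), d₁ j * x j)
            + b * ((∑ j ∈ Finset.range (min l m + 1), d₂ j * x j)
              - ∑ j ∈ Finset.range (k+1), d₂ j * x j)|
          ≤ |ρ₁ * ∑ j ∈ Finset.range (m+1), d₁ j * x j|
            + |b * ((∑ j ∈ Finset.range (min l m + 1), d₂ j * x j)
              - ∑ j ∈ Finset.range (k+1), d₂ j * x j)| := abs_add_le _ _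
        _ ≤ 2 := by linarith
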